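/- Let d ≥ 1 and e ≥ 0 be integers, let R be a nonzero complex polynomial, set d₂ = e + d·(deg R), and assume d₂ ≥ 1 and gcd(d, d₂) = 1. Let Y be an arbitrary type and let U, V : ℂ → Y be functions such that U(z^d) = V(z^e · R(z^d)) for all z ∈ ℂ. Then there exists a function H : ℂ → Y such that V(z) = H(z^d) and U(z) = H(z^e · R(z)^d) for all z ∈ ℂ. -/
import Mathlib

open Polynomial

theorem stmt2 {Y : Type*} (d e : ℕ) (hd : 1 ≤ d) (R : Polynomial ℂ) (hR : R ≠ 0)
    (d₂ : ℕ) (hd₂def : d₂ = e + d * R.natDegree) (hd₂ : 1 ≤ d₂) (hcop : Nat.gcd d d₂ = 1)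
    (U V : ℂ → Y) (h : ∀ z : ℂ, U (z ^ d) = V (z ^ e * R.eval (z ^ d))) :
    ∃ H : ℂ → Y, (∀ z : ℂ, V z = H (z ^ d)) ∧ (∀ z : ℂ, U z = H (z ^ e * (R.eval z) ^ d)) := by
  have hd0 : d ≠ 0 := by omega
  -- surjectivity of z ↦ z^e * R(z^d)
  have hsurj : ∀ w : ℂ, ∃ z : ℂ, z ^ e * R.eval (z ^ d) = w := by
    intro w
    set P : ℂ[X] := X ^ e * R.comp (X ^ d) with hP
    have hcomp : R.comp ((X : ℂ[X]) ^ d) ≠ 0 := by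
      rw [Ne, Polynomial.comp_eq_zero_iff]
      push_neg
      refine ⟨hR, fun _ => ?_⟩
      intro hc
      apply_fun natDegree at hc
      rw [natDegree_X_pow, natDegree_C] at hc
      omega
    have hdegP : P.natDegree = d₂ := by
      rw [hP, natDegree_mul (pow_ne_zero _ X_ne_zero) hcomp, natDegree_X_pow,
        natDegree_comp, natDegree_X_pow, hd₂def, Nat.mul_comm]
    have hdeg2 : (P - C w).natDegree = d₂ := by rw [natDegree_sub_C, hdegP]
    have hne : P - C w ≠ 0 := fun hc => by simp [hc] at hdeg2; omega
    have hdpos : 0 < (P - C w).degree := by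
      rw [degree_eq_natDegree hne, hdeg2]; exact_mod_cast hd₂
    obtain ⟨z, hz⟩ := Complex.exists_root hdpos
    refine ⟨z, ?_⟩
    have : eval z P - w = 0 := by simpa [IsRoot] using hz
    have hz2 : eval z P = w := by linear_combination this
    simpa [hP, eval_mul, eval_pow, eval_comp] using hz2
  -- coprimality of e and d
  have hcop2 : Nat.Coprime d e := by
    have h2 : Nat.Coprime d (e + d * R.natDegree) := hd₂def ▸ hcop
    exact (Nat.coprime_add_mul_left_right d e R.natDegree).mp h2
  -- key invariance: V is constant on d-th power fibers
  have key : ∀ a b : ℂ, a ^ d = b ^ d → V a = V b := by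
    intro a b hab
    rcases eq_or_ne b 0 with rfl | hb
    · have : a = 0 := by
        have := hab
        rw [zero_pow hd0, pow_eq_zero_iff hd0] at this
        exact this
      rw [this]
    · set ξ : ℂ := a / b with hξ
      have hξd : ξ ^ d = 1 := by
        rw [hξ, div_pow, hab, div_self (pow_ne_zero _ hb)]
      have hξ0 : ξ ≠ 0 := by
        intro hc; rw [hc, zero_pow hd0] at hξd; exact one_ne_zero hξd.symm
      -- find ζ with ζ^d = 1 and ζ^e = ξ
      have hicop : IsCoprime (e : ℤ) (d : ℤ) := by
        rw [Int.isCoprime_iff_gcd_eq_one]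
        exact_mod_cast hcop2.symm
      obtain ⟨u, v, huv⟩ := hicop
      set ζ : ℂ := ξ ^ u with hζ
      have hζd : ζ ^ d = 1 := by
        rw [hζ, ← zpow_natCast (ξ ^ u) d, ← zpow_mul, mul_comm, zpow_mul,
          zpow_natCast, hξd, one_zpow]
      have hζe : ζ ^ e = ξ := by
        rw [hζ, ← zpow_natCast (ξ ^ u) e, ← zpow_mul]
        have : u * (e : ℤ) = 1 - v * d := by linarith
        rw [this, zpow_sub₀ hξ0, zpow_one, mul_comm v (d : ℤ), zpow_mul,
          zpow_natCast, hξd, one_zpow, div_one]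
      obtain ⟨z, hz⟩ := hsurj b
      have ha : a = (ζ * z) ^ e * R.eval ((ζ * z) ^ d) := by
        rw [mul_pow ζ z d, hζd, one_mul, mul_pow ζ z e, hζe, mul_assoc, hz, hξ,
          div_mul_cancel₀ _ hb]
      rw [ha, ← h (ζ * z), mul_pow, hζd, one_mul, h z, hz]
  -- construct H
  have hroot : ∀ w : ℂ, ∃ y : ℂ, y ^ d = w := fun w =>
    IsAlgClosed.exists_pow_nat_eq w (by omega)
  choose r hr using hroot
  refine ⟨fun w => V (r w), fun z => ?_, fun z => ?_⟩
  · exact (key _ _ (by rw [hr])).symm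
  · obtain ⟨y, hy⟩ : ∃ y : ℂ, y ^ d = z := ⟨r z, hr z⟩
    have h1 : U z = V (y ^ e * R.eval z) := by rw [← hy, h y]
    have h2 : V (r (z ^ e * R.eval z ^ d)) = V (y ^ e * R.eval z) := by
      apply key
      rw [hr, mul_pow, ← pow_mul, mul_comm e d, pow_mul, hy]
    rw [h1, ← h2]
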